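/- With f = (1+χ)·(1-χ)^{-1} in ℚ[χ]/⟨1+χ+⋯+χ^{2^K-1}⟩, one has: w₀(f) = ∞ and w_l(f) = 0 for l ≥ 1; w_l(f ± 1) = 1 - 2^{-l} for all l; w_l(f²-1) = 2 - 2^{1-l}; w₀(f²+1) = 0, w₁(f²+1) = ∞, and w_l(f²+1) = 1 for l ≥ 2. -/

import Mathlib

noncomputable section
open Polynomial

/-- The quotient ring ℚ[χ]/⟨1+χ+⋯+χ^{2^K-1}⟩. -/
abbrev QB (K : ℕ) :=
  Polynomial ℚ ⧸ Ideal.span {(∑ i ∈ Finset.range (2 ^ K), X ^ i : Polynomial ℚ)}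

def mkB (K : ℕ) : Polynomial ℚ →+* QB K := Ideal.Quotient.mk _

/-- The quotient ring ℚ[χ]/⟨1+χ^{2^l}⟩. -/
abbrev QS (l : ℕ) := Polynomial ℚ ⧸ Ideal.span {(1 + X ^ (2 ^ l) : Polynomial ℚ)}

def mkS (l : ℕ) : Polynomial ℚ →+* QS l := Ideal.Quotient.mk _

/-- `IsNF K l g w` : g admits a w_l-normal form pr_l(g) = (2^a/u)·((1-χ)^b·v₁ + 2·v₂)
with u, v₁(1) odd, 0 ≤ b < 2^l, and w = a + b/2^l. -/
def IsNF (K l : ℕ) (g : QB K) (w : ℚ) : Prop :=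
  ∃ (p : Polynomial ℚ) (a u : ℤ) (b : ℕ) (v₁ v₂ : Polynomial ℤ),
    mkB K p = g ∧ Odd u ∧ b < 2 ^ l ∧ Odd (v₁.eval 1) ∧
    mkS l p = mkS l (C ((2 : ℚ) ^ a / (u : ℚ)) *
      ((1 - X) ^ b * v₁.map (Int.castRingHom ℚ) + 2 * v₂.map (Int.castRingHom ℚ))) ∧
    w = a + (b : ℚ) / 2 ^ l

open Classical in
/-- The valuation w_l : w_l(g) = a + b/2^l from the normal form, and ∞ if
1+χ^{2^l} divides g (i.e. no normal form exists). -/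
def wl (K l : ℕ) (g : QB K) : WithTop ℚ :=
  if h : ∃ w : ℚ, IsNF K l g w then (h.choose : WithTop ℚ) else ⊤

/-- f = (1+χ)·(1-χ)⁻¹. -/
def fQ (K : ℕ) : QB K := mkB K (1 + X) * Ring.inverse (mkB K (1 - X))


open Finset

abbrev F2 := ZMod 2
abbrev ι2 : ℤ →+* F2 := Int.castRingHom F2
abbrev ιQ : ℤ →+* ℚ := Int.castRingHom ℚ

lemma two_eq_zero : (2 : F2[X]) = 0 := by
  have h : (2 : F2[X]) = C (2 : F2) := by
    rw [show (2:F2[X]) = ((2:ℕ):F2[X]) by norm_num, ← Polynomial.C_eq_natCast]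
    norm_num
  rw [h, show (2 : F2) = 0 from rfl, map_zero]

lemma negOne : (-1 : F2[X]) = 1 := by
  rw [show (-1 : F2[X]) = C (-1) by rw [map_neg, map_one], show (-1 : F2) = 1 from rfl, map_one]

lemma X1_ne : (1 + X : F2[X]) ≠ 0 := by
  intro h; have := congrArg (eval 0) h; simp at this

lemma pow2 (l : ℕ) : (1 + X : F2[X]) ^ (2 ^ l) = 1 + X ^ (2 ^ l) := by
  have := add_pow_char_pow (R := F2[X]) (p := 2) (n := l) (x := 1) (y := X)
  simpa using this

lemma sub_to_add (a b : F2[X]) : a - b = a + b := by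
  rw [sub_eq_add_neg, ← neg_one_mul, negOne, one_mul]

lemma geom2 (m : ℕ) (hm : (1 + X : F2[X]) ^ m = 1 + X ^ m) (h1 : 1 ≤ m) :
    (∑ i ∈ range m, (X : F2[X]) ^ i) = (1 + X) ^ (m - 1) := by
  have hg := geom_sum_mul (X : F2[X]) m
  rw [sub_to_add X 1, sub_to_add (X^m) 1, add_comm (X:F2[X]) 1, add_comm ((X:F2[X])^m) 1,
    ← hm] at hg
  apply mul_right_cancel₀ X1_ne
  rw [hg, ← pow_succ]
  congr 1
  omega

lemma map2_sub1X : (1 - X : Polynomial ℤ).map ι2 = 1 + X := by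
  rw [Polynomial.map_sub, Polynomial.map_one, Polynomial.map_X, sub_to_add]

lemma map2_sZ (m : ℕ) : (∑ i ∈ range m, (X:Polynomial ℤ)^i).map ι2
    = ∑ i ∈ range m, (X:F2[X])^i := by
  simp [Polynomial.map_sum]

lemma exists_half {p q : Polynomial ℤ} (h : p.map ι2 = q.map ι2) :
    ∃ v : Polynomial ℤ, p = q + 2 * v := by
  have h2 : (C (2:ℤ)) ∣ (p - q) := by
    rw [C_dvd_iff_dvd_coeff]
    intro i
    have hc : (((p - q).coeff i : ℤ) : F2) = 0 := by
      have := congrArg (fun r => r.coeff i) h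
      simp only [coeff_map] at this
      simp only [coeff_sub, Int.cast_sub]
      rw [show ((p.coeff i : ℤ) : F2) = ι2 (p.coeff i) from rfl,
        show ((q.coeff i : ℤ) : F2) = ι2 (q.coeff i) from rfl, this, sub_self]
    exact_mod_cast (ZMod.intCast_zmod_eq_zero_iff_dvd _ 2).mp hc
  obtain ⟨v, hv⟩ := h2
  refine ⟨v, ?_⟩
  rw [show (C (2:ℤ)) = 2 by norm_num] at hv
  linear_combination hv

lemma fact1 (l : ℕ) : ∃ v : Polynomial ℤ,
    (∑ i ∈ range (2^l), (X:Polynomial ℤ)^i) = (1-X)^(2^l - 1) + 2*v := by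
  apply exists_half
  rw [map2_sZ, Polynomial.map_pow, map2_sub1X, geom2 _ (pow2 l) Nat.one_le_two_pow]

lemma fact2 (l : ℕ) : ∃ ε : Polynomial ℤ,
    (1-X:Polynomial ℤ)^(2^l) = (1+X^(2^l)) + 2*ε ∧ ε.eval 1 = -1 := by
  obtain ⟨ε, hε⟩ := exists_half (p := ((1-X:Polynomial ℤ))^(2^l)) (q := 1+X^(2^l))
    (by rw [Polynomial.map_pow, map2_sub1X, pow2]
        simp)
  refine ⟨ε, hε, ?_⟩
  have he := congrArg (eval 1) hε
  rw [eval_pow, eval_sub, eval_one, eval_X, sub_self, zero_pow (Nat.two_pow_pos l).ne',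
    eval_add, eval_add, eval_mul, eval_pow, eval_one, eval_X, one_pow] at he
  have h2 : eval 1 (2 : Polynomial ℤ) = 2 := by norm_num
  rw [h2] at he
  linarith

lemma fact3 (l : ℕ) (hl : 2 ≤ l) : ∃ r : Polynomial ℤ,
    (∑ i ∈ range (2^l), (X:Polynomial ℤ)^i)^2 - 2*(∑ i ∈ range (2^l), (X:Polynomial ℤ)^i) + 2
      = (1+X^(2^l)) * (∑ i ∈ range (2^(l-1)), X^(2*i)) + 2*r ∧ Odd (r.eval 1) := by
  have hq : (∑ i ∈ range (2^(l-1)), (X:F2[X])^(2*i)) = (1+X)^(2^l - 2) := by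
    have h1X2 : (1+X^2:F2[X]) = (1+X)^2 := by
      have := pow2 1; norm_num at this; exact this.symm
    have hgs := geom_sum_mul ((X:F2[X])^2) (2^(l-1))
    rw [sub_to_add ((X:F2[X])^2) 1, add_comm ((X:F2[X])^2) 1] at hgs
    rw [show ((X:F2[X])^2)^(2^(l-1)) = X^(2^l) by
        rw [← pow_mul]; congr 1; rw [mul_comm, ← pow_succ]; congr 1; omega] at hgs
    rw [sub_to_add, add_comm ((X:F2[X])^(2^l)) 1, ← pow2 l] at hgs
    have key : (1 + X^2 : F2[X]) * (∑ i ∈ range (2^(l-1)), (X:F2[X])^(2*i))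
        = (1 + X^2) * (1+X)^(2^l - 2) := by
      rw [show (∑ i ∈ range (2^(l-1)), (X:F2[X])^(2*i))
          = ∑ i ∈ range (2^(l-1)), ((X:F2[X])^2)^i by
            apply Finset.sum_congr rfl; intro i _; rw [← pow_mul]]
      rw [mul_comm, hgs, h1X2, ← pow_add]
      congr 1
      have h4 : 4 ≤ 2^l := by calc (4:ℕ) = 2^2 := rfl
                                _ ≤ 2^l := Nat.pow_le_pow_right (by norm_num) hl
      omega
    have hne : (1 + X^2 : F2[X]) ≠ 0 := by
      rw [h1X2]; exact pow_ne_zero _ X1_ne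
    exact mul_left_cancel₀ hne key
  obtain ⟨r, hr⟩ := exists_half
    (p := (∑ i ∈ range (2^l), (X:Polynomial ℤ)^i)^2 - 2*(∑ i ∈ range (2^l), (X:Polynomial ℤ)^i) + 2)
    (q := (1+X^(2^l)) * (∑ i ∈ range (2^(l-1)), X^(2*i)))
    (by
      rw [Polynomial.map_add, Polynomial.map_sub, Polynomial.map_mul, Polynomial.map_mul,
        Polynomial.map_pow, map2_sZ, Polynomial.map_add, Polynomial.map_one,
        Polynomial.map_pow, Polynomial.map_X]
      rw [show ((2:Polynomial ℤ).map ι2) = (2:F2[X]) by simp, two_eq_zero]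
      rw [show ((∑ i ∈ range (2^(l-1)), (X:Polynomial ℤ)^(2*i)).map ι2)
          = (∑ i ∈ range (2^(l-1)), (X:F2[X])^(2*i)) by simp [Polynomial.map_sum]]
      rw [geom2 _ (pow2 l) Nat.one_le_two_pow, hq, ← pow2 l, ← pow_add, ← pow_mul]
      rw [show (2^l - 1)*2 = 2^l + (2^l - 2) by
        have : 2 ≤ 2^l := by calc (2:ℕ) = 2^1 := rfl
                                  _ ≤ 2^l := Nat.pow_le_pow_right (by norm_num) (by omega)
        omega]
      ring)
  refine ⟨r, hr, ?_⟩
  have he := congrArg (eval 1) hr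
  simp [eval_finset_sum] at he
  have ha1 : (2:ℤ)^(l-1) = 2 * 2^(l-2) := by rw [← pow_succ']; congr 1; omega
  have ha2 : (2:ℤ)^l = 4 * 2^(l-2) := by
    rw [show (4:ℤ) = 2^2 by norm_num, ← pow_add]; congr 1; omega
  rw [ha1, ha2] at he
  refine ⟨4*((2:ℤ)^(l-2))^2 - 3*2^(l-2), ?_⟩
  apply mul_left_cancel₀ (two_ne_zero (α := ℤ))
  linear_combination -he

lemma monic1Xm (m : ℕ) (hm : 1 ≤ m) : (1 + X ^ m : Polynomial ℤ).Monic := by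
  rw [add_comm]
  apply monic_X_pow_add
  rw [degree_one]
  exact_mod_cast hm

lemma dvd_int_of_mkS_eq {l : ℕ} {p q : Polynomial ℤ}
    (h : mkS l (p.map ιQ) = mkS l (q.map ιQ)) :
    (1 + X ^ (2 ^ l) : Polynomial ℤ) ∣ (p - q) := by
  have h1 : p.map ιQ - q.map ιQ ∈ Ideal.span {(1 + X ^ (2 ^ l) : Polynomial ℚ)} :=
    Ideal.Quotient.eq.mp h
  rw [Ideal.mem_span_singleton, ← Polynomial.map_sub,
    show (1 + X ^ (2 ^ l) : Polynomial ℚ) = (1 + X ^ (2 ^ l) : Polynomial ℤ).map ιQ by simp] at h1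
  exact (map_dvd_map ιQ Int.cast_injective (monic1Xm _ Nat.one_le_two_pow)).mp h1

lemma mkS_map_eq_of_dvd {l : ℕ} {p q : Polynomial ℤ}
    (h : (1 + X ^ (2 ^ l) : Polynomial ℤ) ∣ (p - q)) :
    mkS l (p.map ιQ) = mkS l (q.map ιQ) := by
  apply Ideal.Quotient.eq.mpr
  rw [Ideal.mem_span_singleton, ← Polynomial.map_sub,
    show (1 + X ^ (2 ^ l) : Polynomial ℚ) = (1 + X ^ (2 ^ l) : Polynomial ℤ).map ιQ by simp]
  exact Polynomial.map_dvd ιQ h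

lemma eval_one_eq_zero_of_dvd {g : F2[X]} (h : (1 + X) ∣ g) : g.eval 1 = 0 := by
  obtain ⟨c, rfl⟩ := h
  simp [show (1 + 1 : F2) = 0 from rfl]

lemma core1 {l b : ℕ} (hb : b < 2 ^ l) {w : F2[X]} (hw : w.eval 1 = 1)
    (h : (1 + X : F2[X]) ^ (2 ^ l) ∣ (1 + X) ^ b * w) : False := by
  rw [← Nat.add_sub_cancel' hb.le, pow_add] at h
  have h2 : (1 + X : F2[X]) ^ (2 ^ l - b) ∣ w :=
    (mul_dvd_mul_iff_left (pow_ne_zero b X1_ne)).mp h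
  have h3 : (1 + X : F2[X]) ∣ w :=
    dvd_trans (dvd_pow_self _ (Nat.sub_ne_zero_of_lt hb)) h2
  rw [eval_one_eq_zero_of_dvd h3] at hw
  exact zero_ne_one hw

lemma core2aux {l b b' : ℕ} (hle : b ≤ b') (hb : b < 2 ^ l) {w w' : F2[X]}
    (hw : w.eval 1 = 1) (hw' : w'.eval 1 = 1)
    (h : (1 + X : F2[X]) ^ (2 ^ l) ∣ (1 + X) ^ b * w - (1 + X) ^ b' * w') : b = b' := by
  rw [← Nat.add_sub_cancel' hle, pow_add,
    show (1+X:F2[X])^b * w - (1+X)^b * (1+X)^(b'-b) * w' =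
      (1+X)^b * (w - (1+X)^(b'-b) * w') by ring,
    ← Nat.add_sub_cancel' hb.le, pow_add] at h
  have h2 := (mul_dvd_mul_iff_left (pow_ne_zero b X1_ne)).mp h
  have h3 : (1 + X : F2[X]) ∣ w - (1 + X) ^ (b' - b) * w' :=
    dvd_trans (dvd_pow_self _ (Nat.sub_ne_zero_of_lt hb)) h2
  have h4 := eval_one_eq_zero_of_dvd h3
  by_contra hne
  rw [eval_sub, eval_mul, eval_pow, eval_add, eval_one, eval_X, hw, hw',
    show (1+1:F2) = 0 from rfl, zero_pow (by omega), zero_mul, sub_zero] at h4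
  exact one_ne_zero h4

lemma core2 {l b b' : ℕ} (hb : b < 2 ^ l) (hb' : b' < 2 ^ l) {w w' : F2[X]}
    (hw : w.eval 1 = 1) (hw' : w'.eval 1 = 1)
    (h : (1 + X : F2[X]) ^ (2 ^ l) ∣ (1 + X) ^ b * w - (1 + X) ^ b' * w') : b = b' := by
  rcases le_total b b' with hle | hle
  · exact core2aux hle hb hw hw' h
  · exact (core2aux hle hb' hw' hw (dvd_sub_comm.mp h)).symm


-- chunk 2: to be appended into w.lean before the theorem
lemma PK_dvd {K l : ℕ} (hl : l + 1 ≤ K) :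
    (1 + X ^ (2 ^ l) : Polynomial ℚ) ∣ ∑ i ∈ range (2 ^ K), X ^ i := by
  have hgK := geom_sum_mul (X : Polynomial ℚ) (2 ^ K)
  have hgl := geom_sum_mul (X : Polynomial ℚ) (2 ^ l)
  have h1 : ((X : Polynomial ℚ) ^ (2 * 2 ^ l) - 1) ∣ (X ^ (2 ^ K) - 1) := by
    have h := sub_dvd_pow_sub_pow ((X : Polynomial ℚ) ^ (2 * 2 ^ l)) 1 (2 ^ (K - l - 1))
    rw [one_pow, ← pow_mul, show 2 * 2 ^ l * 2 ^ (K - l - 1) = 2 ^ K by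
      rw [← pow_succ', ← pow_add]; congr 1; omega] at h
    exact h
  obtain ⟨c, hc⟩ := h1
  have hXne : (X - 1 : Polynomial ℚ) ≠ 0 := by
    intro h; have := congrArg (eval 0) h; simp at this
  have key : (X - 1 : Polynomial ℚ) * (∑ i ∈ range (2 ^ K), X ^ i)
      = (X - 1) * ((∑ i ∈ range (2 ^ l), X ^ i) * ((1 + X ^ (2 ^ l)) * c)) := by
    have h2 : (X : Polynomial ℚ) ^ (2 * 2 ^ l) = (X ^ (2 ^ l)) ^ 2 := by
      rw [← pow_mul, mul_comm]
    linear_combination hgK + hc - ((1 + X ^ (2 ^ l)) * c) * hgl + c * h2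
  have := mul_left_cancel₀ hXne key
  exact ⟨(∑ i ∈ range (2 ^ l), X ^ i) * c, by rw [this]; ring⟩

lemma mkS_congr {K l : ℕ} (hl : l + 1 ≤ K) {p q : Polynomial ℚ} (h : mkB K p = mkB K q) :
    mkS l p = mkS l q := by
  have h1 : p - q ∈ Ideal.span {(∑ i ∈ range (2 ^ K), X ^ i : Polynomial ℚ)} :=
    Ideal.Quotient.eq.mp h
  rw [Ideal.mem_span_singleton] at h1
  exact Ideal.Quotient.eq.mpr (Ideal.mem_span_singleton.mpr (dvd_trans (PK_dvd hl) h1))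

def cK (K : ℕ) : Polynomial ℚ := C (-(1 / 2 ^ K)) * ∑ i ∈ range (2 ^ K), C ((i : ℚ) + 1) * X ^ i

lemma geomC (n : ℕ) : (1 - X : Polynomial ℚ) * (∑ i ∈ range n, C ((i : ℚ) + 1) * X ^ i)
    = (∑ i ∈ range n, X ^ i) - C ((n : ℕ) : ℚ) * X ^ n := by
  induction n with
  | zero => simp
  | succ n ih =>
    rw [sum_range_succ, sum_range_succ, mul_add, ih]
    simp only [C_add, C_1, Nat.cast_add, Nat.cast_one]
    ring

lemma hinv (K : ℕ) : mkB K (1 - X) * mkB K (cK K) = 1 := by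
  rw [← map_mul, show (1 : QB K) = mkB K 1 from (map_one (mkB K)).symm]
  apply Ideal.Quotient.eq.mpr
  rw [Ideal.mem_span_singleton]
  refine ⟨X - 1 + C (-(1 / 2 ^ K)), ?_⟩
  have hg := geom_sum_mul (X : Polynomial ℚ) (2 ^ K)
  have hC : C (-(1 / 2 ^ K) : ℚ) * C (((2 ^ K : ℕ) : ℚ)) = -1 := by
    rw [← C_mul]
    push_cast
    rw [show (-(1 / 2 ^ K) * 2 ^ K : ℚ) = -1 by
      field_simp]
    simp
  unfold cK
  linear_combination (C (-(1 / 2 ^ K) : ℚ)) * geomC (2 ^ K) - hg - X ^ (2 ^ K) * hC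

lemma fQ_eq (K : ℕ) : fQ K = mkB K ((1 + X) * cK K) := by
  unfold fQ
  have h : Ring.inverse (mkB K (1 - X)) = mkB K (cK K) := by
    rw [show mkB K (1 - X) = ↑(Units.mkOfMulEqOne _ _ (hinv K)) from rfl, Ring.inverse_unit]
    rfl
  rw [h, ← map_mul]

lemma mkS_f {K l : ℕ} (hl : l + 1 ≤ K) :
    mkS l ((1 + X) * cK K)
      = mkS l (((∑ i ∈ range (2 ^ l), X ^ i : Polynomial ℤ) - 1).map ιQ) := by
  have hmX : mkS l (1 + X ^ (2 ^ l) : Polynomial ℚ) = 0 :=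
    Ideal.Quotient.eq_zero_iff_mem.mpr (Ideal.mem_span_singleton.mpr dvd_rfl)
  have hhalf : (C (1 / 2 : ℚ)) * 2 = 1 := by
    have h2C : (2 : Polynomial ℚ) = C 2 := by
      rw [show (2 : Polynomial ℚ) = ((2:ℕ) : Polynomial ℚ) by norm_num, ← Polynomial.C_eq_natCast]
      norm_num
    rw [h2C, ← C_mul]
    norm_num
  have hS1 : mkS l ((1 - X) * cK K) = 1 := by
    have hb : mkB K ((1 - X) * cK K) = mkB K 1 := by
      rw [map_mul, map_one]; exact hinv K
    rw [mkS_congr hl hb, map_one]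
  have hS2 : mkS l ((1 - X) * (C (1 / 2 : ℚ) * ∑ i ∈ range (2 ^ l), X ^ i)) = 1 := by
    have hpoly : (1 - X : Polynomial ℚ) * (C (1 / 2 : ℚ) * ∑ i ∈ range (2 ^ l), X ^ i)
        = C (1 / 2 : ℚ) * 2 - C (1 / 2 : ℚ) * (1 + X ^ (2 ^ l)) := by
      linear_combination (-(C (1 / 2 : ℚ))) * geom_sum_mul (X : Polynomial ℚ) (2 ^ l)
    rw [hpoly, hhalf, map_sub, map_one, map_mul, hmX, mul_zero, sub_zero]
  have hS3 : mkS l (cK K) = mkS l (C (1 / 2 : ℚ) * ∑ i ∈ range (2 ^ l), X ^ i) := by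
    have e1 : mkS l (1 - X) * mkS l (cK K) = 1 := by rw [← map_mul]; exact hS1
    have e2 : mkS l (1 - X) * mkS l (C (1 / 2 : ℚ) * ∑ i ∈ range (2 ^ l), X ^ i) = 1 := by
      rw [← map_mul]; exact hS2
    calc mkS l (cK K)
        = (mkS l (1 - X) * mkS l (C (1 / 2 : ℚ) * ∑ i ∈ range (2 ^ l), X ^ i)) * mkS l (cK K) := by
          rw [e2, one_mul]
      _ = (mkS l (1 - X) * mkS l (cK K)) * mkS l (C (1 / 2 : ℚ) * ∑ i ∈ range (2 ^ l), X ^ i) := by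
          ring
      _ = mkS l (C (1 / 2 : ℚ) * ∑ i ∈ range (2 ^ l), X ^ i) := by rw [e1, one_mul]
  have hpoly2 : (1 + X : Polynomial ℚ) * (C (1 / 2 : ℚ) * ∑ i ∈ range (2 ^ l), X ^ i)
      = C (1 / 2 : ℚ) * (1 + X ^ (2 ^ l)) + ((∑ i ∈ range (2 ^ l), X ^ i) - 1) := by
    linear_combination (C (1 / 2 : ℚ)) * geom_sum_mul (X : Polynomial ℚ) (2 ^ l)
      + ((∑ i ∈ range (2 ^ l), X ^ i : Polynomial ℚ) - 1) * hhalf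
  have hmap : (((∑ i ∈ range (2 ^ l), X ^ i : Polynomial ℤ) - 1).map ιQ)
      = ((∑ i ∈ range (2 ^ l), X ^ i : Polynomial ℚ) - 1) := by
    simp [Polynomial.map_sub, Polynomial.map_sum]
  rw [map_mul, hS3, ← map_mul, hpoly2, map_add, map_mul, hmX, mul_zero, zero_add, hmap]


lemma odd_cast_eq_one {n : ℤ} (h : Odd n) : ((n : F2)) = 1 := by
  obtain ⟨k, hk⟩ := h
  subst hk
  push_cast
  rw [show (2 : F2) = 0 from rfl]
  ring

lemma odd_ne_zero {u : ℤ} (h : Odd u) : (u : ℚ) ≠ 0 := by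
  obtain ⟨k, hk⟩ := h
  have : u ≠ 0 := by omega
  exact_mod_cast this

lemma map2_mod (l : ℕ) : ((1 + X ^ (2 ^ l) : Polynomial ℤ).map ι2) = (1 + X) ^ (2 ^ l) := by
  rw [Polynomial.map_add, Polynomial.map_one, Polynomial.map_pow, Polynomial.map_X, pow2]

lemma eval_one_map2_odd {v : Polynomial ℤ} (h : Odd (v.eval 1)) : (v.map ι2).eval 1 = 1 := by
  rw [Polynomial.eval_one_map]
  exact odd_cast_eq_one h

lemma map2_A (b : ℕ) (v₁ v₂ : Polynomial ℤ) :
    (((1 - X) ^ b * v₁ + 2 * v₂ : Polynomial ℤ)).map ι2 = (1 + X) ^ b * v₁.map ι2 := by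
  rw [Polynomial.map_add, Polynomial.map_mul, Polynomial.map_mul, Polynomial.map_pow,
    map2_sub1X, show ((2 : Polynomial ℤ).map ι2) = (2 : F2[X]) by simp, two_eq_zero,
    zero_mul, add_zero]

lemma Hlem {l b b' : ℕ} (hb : b < 2 ^ l) (hb' : b' < 2 ^ l) {v₁ v₁' w w' : Polynomial ℤ}
    (h1 : Odd (v₁.eval 1)) (h1' : Odd (v₁'.eval 1)) (d : ℕ) (u u' : ℤ)
    (hu : Odd u) (hu' : Odd u')
    (hdvd : (1 + X ^ (2 ^ l) : Polynomial ℤ) ∣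
      (C u' * ((1 - X) ^ b * v₁ + 2 * w) - C (u * 2 ^ d) * ((1 - X) ^ b' * v₁' + 2 * w'))) :
    d = 0 ∧ b = b' := by
  have h2 := Polynomial.map_dvd ι2 hdvd
  rw [Polynomial.map_sub, Polynomial.map_mul, Polynomial.map_mul, map2_A, map2_A,
    Polynomial.map_add, Polynomial.map_one, Polynomial.map_pow, Polynomial.map_X,
    ← pow2 l, map_C, map_C] at h2
  have hcu' : (ι2 u') = 1 := odd_cast_eq_one hu'
  rw [hcu', map_one, one_mul] at h2
  have he1 : (v₁.map ι2).eval 1 = 1 := eval_one_map2_odd h1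
  have he1' : (v₁'.map ι2).eval 1 = 1 := eval_one_map2_odd h1'
  by_cases hd : d = 0
  · subst hd
    have : (ι2 (u * 2 ^ 0)) = 1 := by
      rw [pow_zero, mul_one]; exact odd_cast_eq_one hu
    rw [this, map_one, one_mul] at h2
    exact ⟨rfl, core2 hb hb' he1 he1' h2⟩
  · exfalso
    have : (ι2 (u * 2 ^ d)) = 0 := by
      rw [map_mul, map_pow, show (ι2 2) = 0 from rfl, zero_pow hd, mul_zero]
    rw [this, map_zero, zero_mul, sub_zero] at h2
    exact core1 hb he1 h2

lemma NF_to_map {b : ℕ} (v₁ v₂ : Polynomial ℤ) :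
    ((1 - X : Polynomial ℚ) ^ b * v₁.map ιQ + 2 * v₂.map ιQ)
      = (((1 - X) ^ b * v₁ + 2 * v₂ : Polynomial ℤ)).map ιQ := by
  rw [Polynomial.map_add, Polynomial.map_mul, Polynomial.map_mul, Polynomial.map_pow,
    Polynomial.map_sub, Polynomial.map_one, Polynomial.map_X,
    show ((2 : Polynomial ℤ).map ιQ) = (2 : Polynomial ℚ) by simp]

lemma uniq_aux {l : ℕ} {a a' u u' : ℤ} (hle : a ≤ a') (hu : Odd u) (hu' : Odd u')
    {b b' : ℕ} (hb : b < 2 ^ l) (hb' : b' < 2 ^ l) {v₁ v₂ v₁' v₂' : Polynomial ℤ}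
    (h1 : Odd (v₁.eval 1)) (h1' : Odd (v₁'.eval 1))
    (E : mkS l (C ((2 : ℚ) ^ a / (u : ℚ)) * ((1 - X) ^ b * v₁.map ιQ + 2 * v₂.map ιQ))
       = mkS l (C ((2 : ℚ) ^ a' / (u' : ℚ)) * ((1 - X) ^ b' * v₁'.map ιQ + 2 * v₂'.map ιQ))) :
    a = a' ∧ b = b' := by
  have hu0 : (u : ℚ) ≠ 0 := odd_ne_zero hu
  have hu'0 : (u' : ℚ) ≠ 0 := odd_ne_zero hu'
  have h20 : (2 : ℚ) ≠ 0 := two_ne_zero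
  set d : ℕ := (a' - a).toNat with hdd
  have hda : (a' - a : ℤ) = (d : ℤ) := (Int.toNat_of_nonneg (by omega)).symm
  have hz : (2 : ℚ) ^ (-a) * (2 : ℚ) ^ a = 1 := by
    rw [← zpow_add₀ h20]; simp
  have hz2 : (2 : ℚ) ^ (-a) * (2 : ℚ) ^ a' = (2 : ℚ) ^ (d : ℕ) := by
    rw [← zpow_add₀ h20, show -a + a' = (d : ℤ) by omega, zpow_natCast]
  have E2 := congrArg (HMul.hMul (mkS l (C ((u : ℚ) * u' * (2 : ℚ) ^ (-a))))) E
  rw [← map_mul, ← map_mul] at E2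
  have s1 : C ((u : ℚ) * u' * (2 : ℚ) ^ (-a)) * C ((2 : ℚ) ^ a / (u : ℚ)) = C ((u' : ℤ) : ℚ) := by
    rw [← C_mul]
    congr 1
    rw [div_eq_mul_inv]
    calc (u : ℚ) * u' * (2 : ℚ) ^ (-a) * ((2 : ℚ) ^ a * (u : ℚ)⁻¹)
        = ((u : ℚ) * (u : ℚ)⁻¹) * ((2 : ℚ) ^ (-a) * (2 : ℚ) ^ a) * u' := by ring
      _ = (u' : ℚ) := by rw [mul_inv_cancel₀ hu0, hz]; ring
  have s2 : C ((u : ℚ) * u' * (2 : ℚ) ^ (-a)) * C ((2 : ℚ) ^ a' / (u' : ℚ))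
      = C (((u * 2 ^ d : ℤ)) : ℚ) := by
    rw [← C_mul]
    congr 1
    rw [div_eq_mul_inv]
    push_cast
    calc (u : ℚ) * u' * (2 : ℚ) ^ (-a) * ((2 : ℚ) ^ a' * (u' : ℚ)⁻¹)
        = ((u' : ℚ) * (u' : ℚ)⁻¹) * ((2 : ℚ) ^ (-a) * (2 : ℚ) ^ a') * u := by ring
      _ = (u : ℚ) * 2 ^ (d : ℕ) := by rw [mul_inv_cancel₀ hu'0, hz2]; ring
  rw [← mul_assoc, ← mul_assoc, s1, s2, NF_to_map, NF_to_map] at E2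
  have E3 : mkS l ((C u' * ((1 - X) ^ b * v₁ + 2 * v₂) : Polynomial ℤ).map ιQ)
      = mkS l ((C (u * 2 ^ d) * ((1 - X) ^ b' * v₁' + 2 * v₂') : Polynomial ℤ).map ιQ) := by
    rw [Polynomial.map_mul, Polynomial.map_mul, map_C, map_C]
    exact_mod_cast E2
  have hdvd := dvd_int_of_mkS_eq E3
  obtain ⟨hd0, hbb⟩ := Hlem hb hb' h1 h1' d u u' hu hu' hdvd
  constructor
  · omega
  · exact hbb

lemma isNF_unique {K l : ℕ} (hl : l + 1 ≤ K) {g : QB K} {w w' : ℚ}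
    (h : IsNF K l g w) (h' : IsNF K l g w') : w = w' := by
  obtain ⟨p, a, u, b, v₁, v₂, hp, hu, hb, h1, heq, hw⟩ := h
  obtain ⟨p', a', u', b', v₁', v₂', hp', hu', hb', h1', heq', hw'⟩ := h'
  have E := (heq.symm.trans (mkS_congr hl (hp.trans hp'.symm))).trans heq'
  rcases le_total a a' with hle | hle
  · obtain ⟨ha, hbb⟩ := uniq_aux hle hu hu' hb hb' h1 h1' E
    rw [hw, hw', ha, hbb]
  · obtain ⟨ha, hbb⟩ := uniq_aux hle hu' hu hb' hb h1' h1 E.symm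
    rw [hw, hw', ha, hbb]

lemma wl_eq {K l : ℕ} (hl : l + 1 ≤ K) {g : QB K} {w : ℚ} (h : IsNF K l g w) :
    wl K l g = (w : WithTop ℚ) := by
  unfold wl
  rw [dif_pos ⟨w, h⟩]
  exact congrArg (fun w : ℚ => (w : WithTop ℚ))
    (isNF_unique hl (Exists.choose_spec (⟨w, h⟩ : ∃ w, IsNF K l g w)) h)

lemma wl_top {K l : ℕ} (hl : l + 1 ≤ K) {g : QB K} (p₀ : Polynomial ℚ)
    (h₀ : mkB K p₀ = g) (hz : mkS l p₀ = 0) : wl K l g = ⊤ := by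
  unfold wl
  rw [dif_neg]
  rintro ⟨w, p, a, u, b, v₁, v₂, hp, hu, hb, h1, heq, hw⟩
  have hu0 : (u : ℚ) ≠ 0 := odd_ne_zero hu
  have hz2 : mkS l p = 0 := by rw [mkS_congr hl (hp.trans h₀.symm), hz]
  rw [hz2] at heq
  have hc : C ((u : ℚ) / (2 : ℚ) ^ a) * C ((2 : ℚ) ^ a / (u : ℚ)) = 1 := by
    rw [← C_mul, div_mul_div_comm, mul_comm ((u:ℚ)) ((2:ℚ)^a),
      div_self (mul_ne_zero (zpow_ne_zero a two_ne_zero) hu0), C_1]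
  have h3 : mkS l (C ((u : ℚ) / (2 : ℚ) ^ a)
      * (C ((2 : ℚ) ^ a / (u : ℚ)) * ((1 - X) ^ b * v₁.map ιQ + 2 * v₂.map ιQ))) = 0 := by
    rw [map_mul, ← heq, mul_zero]
  rw [← mul_assoc, hc, one_mul, NF_to_map] at h3
  have h4 : mkS l ((((1 - X) ^ b * v₁ + 2 * v₂ : Polynomial ℤ)).map ιQ)
      = mkS l ((0 : Polynomial ℤ).map ιQ) := by
    rw [Polynomial.map_zero, map_zero, h3]
  have h5 := dvd_int_of_mkS_eq h4
  rw [sub_zero] at h5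
  have h6 := Polynomial.map_dvd ι2 h5
  rw [map2_A, map2_mod] at h6
  exact core1 hb (eval_one_map2_odd h1) h6


lemma twoCQ : (2 : Polynomial ℚ) = C 2 := by
  rw [show (2 : Polynomial ℚ) = ((2:ℕ) : Polynomial ℚ) by norm_num, ← Polynomial.C_eq_natCast]
  norm_num

lemma NF_rhs (n b : ℕ) (v₁ v₂ : Polynomial ℤ) :
    C ((2:ℚ) ^ ((n:ℤ)) / (((1:ℤ)):ℚ)) * ((1-X) ^ b * v₁.map ιQ + 2 * v₂.map ιQ)
      = ((2:Polynomial ℤ) ^ n * ((1-X) ^ b * v₁ + 2 * v₂)).map ιQ := by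
  rw [NF_to_map, Polynomial.map_mul, Polynomial.map_pow,
    show ((2 : Polynomial ℤ).map ιQ) = (2 : Polynomial ℚ) by simp]
  congr 1
  rw [Int.cast_one, div_one, zpow_natCast, twoCQ, ← C_pow]

lemma isNF_build {K l : ℕ} {g : QB K} {p : Polynomial ℚ} (hp : mkB K p = g)
    {z : Polynomial ℤ} (hz : mkS l p = mkS l (z.map ιQ))
    (n b : ℕ) (hb : b < 2 ^ l) (v₁ v₂ : Polynomial ℤ) (h1 : Odd (v₁.eval 1))
    (hdvd : (1 + X ^ (2 ^ l) : Polynomial ℤ) ∣ (z - (2:Polynomial ℤ) ^ n * ((1-X) ^ b * v₁ + 2 * v₂)))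
    {w : ℚ} (hw : w = (n : ℚ) + (b : ℚ) / 2 ^ l) : IsNF K l g w := by
  refine ⟨p, (n : ℤ), 1, b, v₁, v₂, hp, ⟨0, by ring⟩, hb, h1, ?_, by rw [hw]; push_cast; ring⟩
  rw [NF_rhs, hz]
  exact mkS_map_eq_of_dvd hdvd

lemma eval_sZ (m : ℕ) : (∑ i ∈ range m, (X : Polynomial ℤ) ^ i).eval 1 = m := by
  simp

lemma pow_shift (l : ℕ) (hl : 1 ≤ l) : (2:ℤ) ^ l = 2 * 2 ^ (l - 1) := by
  rw [← pow_succ']; congr 1; omega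

-- image computations for the four elements
lemma hz_f {K l : ℕ} (hl : l + 1 ≤ K) :
    mkS l ((1 + X) * cK K)
      = mkS l (((∑ i ∈ range (2 ^ l), X ^ i : Polynomial ℤ) - 1).map ιQ) := mkS_f hl

lemma hz_f1 {K l : ℕ} (hl : l + 1 ≤ K) :
    mkS l ((1 + X) * cK K + 1)
      = mkS l ((∑ i ∈ range (2 ^ l), X ^ i : Polynomial ℤ).map ιQ) := by
  rw [map_add (mkS l), mkS_f hl, map_one,
    show ((∑ i ∈ range (2 ^ l), X ^ i : Polynomial ℤ).map ιQ)
      = ((∑ i ∈ range (2 ^ l), X ^ i : Polynomial ℤ) - 1).map ιQ + 1 by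
        rw [Polynomial.map_sub, Polynomial.map_one]; ring,
    map_add (mkS l), map_one]

lemma hz_f2 {K l : ℕ} (hl : l + 1 ≤ K) :
    mkS l ((1 + X) * cK K - 1)
      = mkS l (((∑ i ∈ range (2 ^ l), X ^ i : Polynomial ℤ) - 2).map ιQ) := by
  rw [map_sub (mkS l), mkS_f hl, map_one,
    show (((∑ i ∈ range (2 ^ l), X ^ i : Polynomial ℤ) - 2).map ιQ)
      = ((∑ i ∈ range (2 ^ l), X ^ i : Polynomial ℤ) - 1).map ιQ - 1 by
        rw [Polynomial.map_sub, Polynomial.map_sub, Polynomial.map_one,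
          show ((2 : Polynomial ℤ).map ιQ) = (2 : Polynomial ℚ) by simp]
        ring,
    map_sub (mkS l), map_one]

lemma hz_fsq {K l : ℕ} (hl : l + 1 ≤ K) (c : Polynomial ℤ) :
    mkS l (((1 + X) * cK K) ^ 2 + c.map ιQ)
      = mkS l ((((∑ i ∈ range (2 ^ l), X ^ i : Polynomial ℤ) - 1) ^ 2 + c).map ιQ) := by
  rw [map_add (mkS l), map_pow (mkS l), mkS_f hl, Polynomial.map_add, Polynomial.map_pow,
    map_add (mkS l), map_pow (mkS l)]


/-- Values of w_l on f, f ± 1, f² - 1 and f² + 1. -/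
theorem stmt12 (K : ℕ) (hK : 2 ≤ K) :
    wl K 0 (fQ K) = ⊤ ∧
    (∀ l : ℕ, 1 ≤ l → l ≤ K - 1 → wl K l (fQ K) = (0 : ℚ)) ∧
    (∀ l : ℕ, l ≤ K - 1 →
      wl K l (fQ K + 1) = ((1 - (2 : ℚ) ^ (-(l : ℤ)) : ℚ) : WithTop ℚ) ∧
      wl K l (fQ K - 1) = ((1 - (2 : ℚ) ^ (-(l : ℤ)) : ℚ) : WithTop ℚ)) ∧
    (∀ l : ℕ, l ≤ K - 1 →
      wl K l (fQ K ^ 2 - 1) = ((2 - (2 : ℚ) ^ (1 - (l : ℤ)) : ℚ) : WithTop ℚ)) ∧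
    wl K 0 (fQ K ^ 2 + 1) = (0 : ℚ) ∧
    wl K 1 (fQ K ^ 2 + 1) = ⊤ ∧
    (∀ l : ℕ, 2 ≤ l → l ≤ K - 1 → wl K l (fQ K ^ 2 + 1) = (1 : ℚ)) := by
  have hK0 : (0:ℕ) + 1 ≤ K := by omega
  have hpf : ∀ c : Polynomial ℤ, mkB K (((1 + X) * cK K) ^ 2 + c.map ιQ)
      = fQ K ^ 2 + (mkB K (c.map ιQ)) := by
    intro c
    rw [map_add, map_pow, ← fQ_eq]
  refine ⟨?_, ?_, ?_, ?_, ?_, ?_, ?_⟩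
  · -- wl K 0 (fQ K) = ⊤
    apply wl_top hK0 ((1 + X) * cK K) (fQ_eq K).symm
    rw [hz_f hK0, show ((∑ i ∈ range (2 ^ 0), X ^ i : Polynomial ℤ) - 1) = 0 by
      norm_num [Finset.sum_range_one], Polynomial.map_zero, map_zero]
  · -- l ≥ 1 : wl K l (fQ K) = 0
    intro l hl1 hlK
    have hl : l + 1 ≤ K := by omega
    exact wl_eq hl (isNF_build (fQ_eq K).symm (hz_f hl) 0 0 (Nat.two_pow_pos l)
      ((∑ i ∈ range (2 ^ l), X ^ i) - 1) 0
      (by rw [eval_sub, eval_one, eval_sZ]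
          refine ⟨2 ^ (l - 1) - 1, ?_⟩
          rw [show ((2^l : ℕ) : ℤ) = (2:ℤ)^l by push_cast; ring, pow_shift l hl1]
          ring)
      ⟨0, by ring⟩ (by norm_num))
  · -- f ± 1
    intro l hlK
    have hl : l + 1 ≤ K := by omega
    obtain ⟨v, hv⟩ := fact1 l
    have hb : 2 ^ l - 1 < 2 ^ l := by have := Nat.two_pow_pos l; omega
    have h1l : (1:ℕ) ≤ 2 ^ l := Nat.one_le_two_pow
    have h2Q : ((2:ℚ))^l ≠ 0 := by positivity
    have hw : (1 - (2 : ℚ) ^ (-(l : ℤ)) : ℚ) = ((0:ℕ) : ℚ) + ((2 ^ l - 1 : ℕ) : ℚ) / 2 ^ l := by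
      rw [zpow_neg, zpow_natCast]
      push_cast [h1l]
      field_simp
      ring
    constructor
    · exact wl_eq hl (isNF_build
        (by rw [map_add, map_one, ← fQ_eq] : mkB K ((1 + X) * cK K + 1) = fQ K + 1)
        (hz_f1 hl) 0 (2 ^ l - 1) hb 1 v
        (by rw [eval_one]; exact ⟨0, by norm_num⟩)
        ⟨0, by linear_combination hv⟩ (by push_cast at hw ⊢; linarith [hw]))
    · exact wl_eq hl (isNF_build
        (by rw [map_sub, map_one, ← fQ_eq] : mkB K ((1 + X) * cK K - 1) = fQ K - 1)
        (hz_f2 hl) 0 (2 ^ l - 1) hb 1 (v - 1)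
        (by rw [eval_one]; exact ⟨0, by norm_num⟩)
        ⟨0, by linear_combination hv⟩ (by push_cast at hw ⊢; linarith [hw]))
  · -- f² - 1
    intro l hlK
    have hl : l + 1 ≤ K := by omega
    have hp : mkB K (((1 + X) * cK K) ^ 2 + ((-1 : Polynomial ℤ)).map ιQ) = fQ K ^ 2 - 1 := by
      rw [hpf, Polynomial.map_neg, Polynomial.map_one, map_neg, map_one, sub_eq_add_neg]
    have hz := hz_fsq hl (-1)
    by_cases hl0 : l = 0
    · subst hl0
      exact wl_eq hl (isNF_build hp hz 0 0 (Nat.two_pow_pos 0)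
        ((((∑ i ∈ range (2 ^ 0), X ^ i : Polynomial ℤ)) - 1) ^ 2 + (-1)) 0
        (by norm_num [Finset.sum_range_one])
        ⟨0, by ring⟩ (by norm_num))
    · obtain ⟨v, hv⟩ := fact1 l
      obtain ⟨ε, hε, hε1⟩ := fact2 l
      have h2l : (2:ℕ) ≤ 2 ^ l := by
        calc (2:ℕ) = 2 ^ 1 := rfl
          _ ≤ 2 ^ l := Nat.pow_le_pow_right (by norm_num) (by omega)
      rw [show 2 ^ l - 1 = 2 ^ l - 2 + 1 by omega] at hv
      conv at hε => lhs; rw [show (2:ℕ) ^ l = 2 ^ l - 2 + 2 by omega]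
      exact wl_eq hl (isNF_build hp hz 1 (2 ^ l - 2) (by omega)
        (ε + (1 - X) * (2 * v - 1)) (v * (v - 1))
        (by rw [eval_add, eval_mul, eval_sub, eval_one, eval_X, sub_self, zero_mul,
              add_zero, hε1]
            exact ⟨-1, by norm_num⟩)
        ⟨(1 - X) ^ (2 ^ l - 2), by
          linear_combination ((∑ i ∈ range (2 ^ l), X ^ i : Polynomial ℤ)
            + (1 - X) ^ (2 ^ l - 2 + 1) + 2 * v - 2) * hv + (1 - X) ^ (2 ^ l - 2) * hε⟩
        (by rw [zpow_sub₀ (two_ne_zero), zpow_one, zpow_natCast]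
            push_cast [h2l]
            field_simp
            ring))
  · -- wl K 0 (f²+1) = 0
    have hp : mkB K (((1 + X) * cK K) ^ 2 + ((1 : Polynomial ℤ)).map ιQ) = fQ K ^ 2 + 1 := by
      rw [hpf, Polynomial.map_one, map_one]
    exact wl_eq hK0 (isNF_build hp (hz_fsq hK0 1) 0 0 (Nat.two_pow_pos 0)
      ((((∑ i ∈ range (2 ^ 0), X ^ i : Polynomial ℤ)) - 1) ^ 2 + 1) 0
      (by norm_num [Finset.sum_range_one])
      ⟨0, by ring⟩ (by norm_num))
  · -- wl K 1 (f²+1) = ⊤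
    have hl : (1:ℕ) + 1 ≤ K := by omega
    have hp : mkB K (((1 + X) * cK K) ^ 2 + ((1 : Polynomial ℤ)).map ιQ) = fQ K ^ 2 + 1 := by
      rw [hpf, Polynomial.map_one, map_one]
    apply wl_top hl _ hp
    rw [hz_fsq hl 1]
    have hs2 : ((∑ i ∈ range (2 ^ 1), X ^ i : Polynomial ℤ)) = 1 + X := by
      rw [show (2:ℕ)^1 = 2 by norm_num, Finset.sum_range_succ, Finset.sum_range_one]
      ring
    have hzz : ((((∑ i ∈ range (2 ^ 1), X ^ i : Polynomial ℤ)) - 1) ^ 2 + 1)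
        = 1 + X ^ (2 ^ 1) := by
      rw [hs2, show (2:ℕ)^1 = 2 by norm_num]
      ring
    rw [hzz]
    apply Ideal.Quotient.eq_zero_iff_mem.mpr
    apply Ideal.mem_span_singleton.mpr
    refine ⟨1, ?_⟩
    rw [Polynomial.map_add, Polynomial.map_one, Polynomial.map_pow, Polynomial.map_X, mul_one]
  · -- l ≥ 2 : wl K l (f²+1) = 1
    intro l hl2 hlK
    have hl : l + 1 ≤ K := by omega
    have hp : mkB K (((1 + X) * cK K) ^ 2 + ((1 : Polynomial ℤ)).map ιQ) = fQ K ^ 2 + 1 := by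
      rw [hpf, Polynomial.map_one, map_one]
    obtain ⟨r, hr, hodd⟩ := fact3 l hl2
    exact wl_eq hl (isNF_build hp (hz_fsq hl 1) 1 0 (Nat.two_pow_pos l) r 0 hodd
      ⟨(∑ i ∈ range (2 ^ (l - 1)), X ^ (2 * i)), by linear_combination hr⟩
      (by norm_num))
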